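/- Let X_1, ..., X_n be discrete, independent random variables with E[X_i] = 0 and |X_i| ≤ C almost surely, and let Y = Σ X_i with Var(Y) = Σ Var(X_i). Then for λ ≥ 0, P(|Y| ≥ λ·sqrt(Var(Y))) ≤ 2·exp(−λ²/(2e^a)), where a ≥ 0 is such that λ = a·e^a·sqrt(Var(Y))/C. -/

import Mathlib

set_option maxHeartbeats 1000000
open MeasureTheory ProbabilityTheory Real

lemma exp_quad_bound {a u : ℝ} (ha : 0 ≤ a) (hu : |u| ≤ a) :
    Real.exp u ≤ 1 + u + u ^ 2 / 2 * Real.exp a := by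
  rcases le_total u 0 with h0 | h0
  · have key : Real.exp u ≤ 1 + u + u ^ 2 / 2 := by
      set f : ℝ → ℝ := fun x => 1 + x + x ^ 2 / 2 - Real.exp x with hf
      have hd : ∀ x : ℝ, HasDerivAt f (1 + x - Real.exp x) x := by
        intro x
        have h1 : HasDerivAt (fun x : ℝ => 1 + x + x ^ 2 / 2 - Real.exp x)
            (0 + 1 + (2 * x ^ 1) / 2 - Real.exp x) x := by
          exact (((hasDerivAt_const x (1:ℝ)).add (hasDerivAt_id x)).add
            ((hasDerivAt_pow 2 x).div_const 2)).sub (Real.hasDerivAt_exp x)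
        convert h1 using 1
        ring
      have hanti : Antitone f := by
        refine antitone_of_deriv_nonpos (fun x => (hd x).differentiableAt) (fun x => ?_)
        rw [(hd x).deriv]
        have := Real.add_one_le_exp x
        linarith
      have := hanti h0
      simp only [hf, pow_two, Real.exp_zero] at this ⊢
      nlinarith [this]
    have h2 : u ^ 2 / 2 ≤ u ^ 2 / 2 * Real.exp a := by
      nlinarith [Real.one_le_exp ha, sq_nonneg u]
    linarith
  · have hua : u ≤ a := le_trans (le_abs_self u) hu
    set g : ℝ → ℝ := fun x => 1 + x + x ^ 2 / 2 * Real.exp a - Real.exp x with hg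
    have hd : ∀ x : ℝ, HasDerivAt g (1 + x * Real.exp a - Real.exp x) x := by
      intro x
      have h1 : HasDerivAt (fun x : ℝ => 1 + x + x ^ 2 / 2 * Real.exp a - Real.exp x)
          (0 + 1 + ((2 * x ^ 1) / 2) * Real.exp a - Real.exp x) x := by
        exact (((hasDerivAt_const x (1:ℝ)).add (hasDerivAt_id x)).add
          (((hasDerivAt_pow 2 x).div_const 2).mul_const (Real.exp a))).sub (Real.hasDerivAt_exp x)
      convert h1 using 1
      ring
    have hmono : MonotoneOn g (Set.Icc 0 a) := by
      refine monotoneOn_of_deriv_nonneg (convex_Icc 0 a)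
        (fun x _ => (hd x).differentiableAt.continuousAt.continuousWithinAt)
        (fun x _ => ((hd x).differentiableAt).differentiableWithinAt) (fun x hx => ?_)
      rw [interior_Icc] at hx
      rw [(hd x).deriv]
      have hx0 : 0 ≤ x := hx.1.le
      have hxa : x ≤ a := hx.2.le
      have hmul : Real.exp (-x) * Real.exp x = 1 := by
        rw [← Real.exp_add]; simp
      have h1 : Real.exp x - 1 ≤ x * Real.exp x := by
        nlinarith [Real.add_one_le_exp (-x), Real.exp_pos x, hmul]
      have h2 : x * Real.exp x ≤ x * Real.exp a := by
        have := Real.exp_le_exp.2 hxa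
        nlinarith
      linarith
    have := hmono (Set.mem_Icc.2 ⟨le_refl 0, ha⟩) (Set.mem_Icc.2 ⟨h0, hua⟩) h0
    simp only [hg, Real.exp_zero] at this ⊢
    nlinarith [this]

lemma chernoff_side {Ω : Type*} [MeasurableSpace Ω] (μ : Measure Ω) [IsProbabilityMeasure μ]
    (n : ℕ) (X : Fin n → Ω → ℝ) (hmeas : ∀ i, Measurable (X i))
    (hindep : iIndepFun X μ)
    (C : ℝ) (hC : 0 < C) (hbd : ∀ i, ∀ᵐ ω ∂μ, |X i ω| ≤ C)
    (hmean : ∀ i, ∫ ω, X i ω ∂μ = 0)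
    (σ : ℝ) (hσ : σ = Real.sqrt (∑ i, ∫ ω, (X i ω) ^ 2 ∂μ))
    (lam a : ℝ) (ha : 0 ≤ a) (hlam : lam = a * Real.exp a * σ / C) :
    (μ {ω | lam * σ ≤ ∑ i, X i ω}).toReal ≤ Real.exp (-lam ^ 2 / (2 * Real.exp a)) := by
  set t : ℝ := a / C with ht_def
  have ht : 0 ≤ t := div_nonneg ha hC.le
  have htC : t * C = a := div_mul_cancel₀ a hC.ne'
  -- integrability
  have hint_X : ∀ i, Integrable (X i) μ := by
    intro i
    refine (integrable_const C).mono' (hmeas i).aestronglyMeasurable ?_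
    filter_upwards [hbd i] with ω hω
    simpa [Real.norm_eq_abs] using hω
  have hint_X2 : ∀ i, Integrable (fun ω => (X i ω) ^ 2) μ := by
    intro i
    refine (integrable_const (C ^ 2)).mono' ((hmeas i).pow_const 2).aestronglyMeasurable ?_
    filter_upwards [hbd i] with ω hω
    rw [Real.norm_eq_abs, abs_pow]
    exact pow_le_pow_left₀ (abs_nonneg _) hω 2
  have hint_exp : ∀ i, Integrable (fun ω => Real.exp (t * X i ω)) μ := by
    intro i
    refine (integrable_const (Real.exp (t * C))).mono'
      ((hmeas i).const_mul t).exp.aestronglyMeasurable ?_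
    filter_upwards [hbd i] with ω hω
    rw [Real.norm_eq_abs, Real.abs_exp]
    exact Real.exp_le_exp.2 (by nlinarith [abs_le.1 hω])
  have hV : ∀ i, 0 ≤ ∫ ω, (X i ω) ^ 2 ∂μ :=
    fun i => integral_nonneg fun ω => sq_nonneg _
  have hσ0 : 0 ≤ σ := hσ ▸ Real.sqrt_nonneg _
  have hσ2 : σ ^ 2 = ∑ i, ∫ ω, (X i ω) ^ 2 ∂μ := by
    rw [hσ, Real.sq_sqrt (Finset.sum_nonneg fun i _ => hV i)]
  -- mgf bound for each i
  have hmgf_i : ∀ i, mgf (X i) μ t ≤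
      Real.exp (t ^ 2 * Real.exp a / 2 * ∫ ω, (X i ω) ^ 2 ∂μ) := by
    intro i
    have hmid : Integrable (fun ω => 1 + t * X i ω + t ^ 2 * Real.exp a / 2 * (X i ω) ^ 2) μ :=
      ((integrable_const 1).add ((hint_X i).const_mul t)).add ((hint_X2 i).const_mul _)
    have step1 : mgf (X i) μ t ≤
        ∫ ω, (1 + t * X i ω + t ^ 2 * Real.exp a / 2 * (X i ω) ^ 2) ∂μ := by
      refine integral_mono_ae (hint_exp i) hmid ?_
      filter_upwards [hbd i] with ω hω
      have hu : |t * X i ω| ≤ a := by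
        rw [abs_mul, abs_of_nonneg ht]
        calc t * |X i ω| ≤ t * C := by nlinarith
          _ = a := htC
      have h := exp_quad_bound ha hu
      have heq : (t * X i ω) ^ 2 / 2 * Real.exp a = t ^ 2 * Real.exp a / 2 * (X i ω) ^ 2 := by
        ring
      linarith [heq ▸ h]
    have step2 : ∫ ω, (1 + t * X i ω + t ^ 2 * Real.exp a / 2 * (X i ω) ^ 2) ∂μ =
        1 + t ^ 2 * Real.exp a / 2 * ∫ ω, (X i ω) ^ 2 ∂μ := by
      have i1 : Integrable (fun ω => 1 + t * X i ω) μ :=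
        (integrable_const 1).add ((hint_X i).const_mul t)
      have i2 : Integrable (fun ω => t ^ 2 * Real.exp a / 2 * (X i ω) ^ 2) μ :=
        (hint_X2 i).const_mul _
      rw [integral_add i1 i2, integral_add (integrable_const 1) ((hint_X i).const_mul t),
        integral_const, integral_const_mul, integral_const_mul, hmean i]
      simp
    calc mgf (X i) μ t ≤ 1 + t ^ 2 * Real.exp a / 2 * ∫ ω, (X i ω) ^ 2 ∂μ := by
          rw [← step2]; exact step1
      _ ≤ Real.exp (t ^ 2 * Real.exp a / 2 * ∫ ω, (X i ω) ^ 2 ∂μ) := by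
          linarith [Real.add_one_le_exp (t ^ 2 * Real.exp a / 2 * ∫ ω, (X i ω) ^ 2 ∂μ)]
  -- mgf of sum
  have hmgf_sum : mgf (∑ i, X i) μ t ≤ Real.exp (t ^ 2 * Real.exp a * σ ^ 2 / 2) := by
    rw [hindep.mgf_sum hmeas Finset.univ]
    calc ∏ i, mgf (X i) μ t
        ≤ ∏ i, Real.exp (t ^ 2 * Real.exp a / 2 * ∫ ω, (X i ω) ^ 2 ∂μ) :=
          Finset.prod_le_prod (fun i _ => mgf_nonneg) (fun i _ => hmgf_i i)
      _ = Real.exp (∑ i, t ^ 2 * Real.exp a / 2 * ∫ ω, (X i ω) ^ 2 ∂μ) := by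
          rw [Real.exp_sum]
      _ = Real.exp (t ^ 2 * Real.exp a * σ ^ 2 / 2) := by
          rw [← Finset.mul_sum, ← hσ2]; ring_nf
  -- integrability of exp(t * sum)
  have hint_sum0 : Integrable (fun ω => Real.exp (t * ∑ i, X i ω)) μ := by
    refine (integrable_const (Real.exp (t * (n * C)))).mono'
      ((Finset.measurable_sum Finset.univ fun i _ => hmeas i).const_mul t).exp.aestronglyMeasurable ?_
    filter_upwards [ae_all_iff.2 hbd] with ω hω
    rw [Real.norm_eq_abs, Real.abs_exp]
    refine Real.exp_le_exp.2 (mul_le_mul_of_nonneg_left ?_ ht)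
    calc ∑ i, X i ω ≤ ∑ i, |X i ω| := Finset.sum_le_sum fun i _ => le_abs_self _
      _ ≤ ∑ _i : Fin n, C := Finset.sum_le_sum fun i _ => hω i
      _ = n * C := by simp [mul_comm]
  have hint_sum : Integrable (fun ω => Real.exp (t * (∑ i, X i) ω)) μ := by
    simpa only [Finset.sum_apply] using hint_sum0
  -- Chernoff
  have hch := measure_ge_le_exp_mul_mgf (μ := μ) (X := ∑ i, X i) (lam * σ) ht hint_sum
  have hset : {ω | lam * σ ≤ (∑ i, X i) ω} = {ω | lam * σ ≤ ∑ i, X i ω} := by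
    ext ω; simp [Finset.sum_apply]
  rw [hset] at hch
  refine hch.trans ?_
  calc Real.exp (-t * (lam * σ)) * mgf (∑ i, X i) μ t
      ≤ Real.exp (-t * (lam * σ)) * Real.exp (t ^ 2 * Real.exp a * σ ^ 2 / 2) := by
        exact mul_le_mul_of_nonneg_left hmgf_sum (Real.exp_pos _).le
    _ = Real.exp (-lam ^ 2 / (2 * Real.exp a)) := by
        rw [← Real.exp_add]
        congr 1
        rw [hlam, ht_def]
        field_simp
        ring

theorem stmt7 {Ω : Type*} [MeasurableSpace Ω] (μ : Measure Ω) [IsProbabilityMeasure μ]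
    (n : ℕ) (X : Fin n → Ω → ℝ) (hmeas : ∀ i, Measurable (X i))
    (hfin : ∀ i, (Set.range (X i)).Finite)
    (hindep : iIndepFun X μ)
    (C : ℝ) (hC : 0 < C) (hbd : ∀ i, ∀ᵐ ω ∂μ, |X i ω| ≤ C)
    (hmean : ∀ i, ∫ ω, X i ω ∂μ = 0)
    (Y : Ω → ℝ) (hY : Y = fun ω => ∑ i, X i ω)
    (σ : ℝ) (hσ : σ = Real.sqrt (∑ i, ∫ ω, (X i ω) ^ 2 ∂μ))
    (lam a : ℝ) (ha : 0 ≤ a) (hlam : lam = a * Real.exp a * σ / C) :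
    (μ {ω | lam * σ ≤ |Y ω|}).toReal ≤ 2 * Real.exp (-lam ^ 2 / (2 * Real.exp a)) := by
  subst hY
  set Z : Fin n → Ω → ℝ := fun i ω => -X i ω with hZ
  have hmeasZ : ∀ i, Measurable (Z i) := fun i => (hmeas i).neg
  have hindepZ : iIndepFun Z μ :=
    hindep.comp (fun _ x => -x) (fun _ => measurable_neg)
  have hbdZ : ∀ i, ∀ᵐ ω ∂μ, |Z i ω| ≤ C := by
    intro i; filter_upwards [hbd i] with ω hω; simpa [hZ] using hω
  have hmeanZ : ∀ i, ∫ ω, Z i ω ∂μ = 0 := by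
    intro i; simp [hZ, integral_neg, hmean i]
  have hσZ : σ = Real.sqrt (∑ i, ∫ ω, (Z i ω) ^ 2 ∂μ) := by
    simpa [hZ] using hσ
  have h1 := chernoff_side μ n X hmeas hindep C hC hbd hmean σ hσ lam a ha hlam
  have h2 := chernoff_side μ n Z hmeasZ hindepZ C hC hbdZ hmeanZ σ hσZ lam a ha hlam
  have hsub : {ω | lam * σ ≤ |∑ i, X i ω|} ⊆
      {ω | lam * σ ≤ ∑ i, X i ω} ∪ {ω | lam * σ ≤ ∑ i, Z i ω} := by
    intro ω hω
    simp only [Set.mem_setOf_eq] at hω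
    rcases le_abs.1 hω with h | h
    · exact Or.inl h
    · exact Or.inr (by simpa [hZ, Finset.sum_neg_distrib] using h)
  have hmeasure : (μ {ω | lam * σ ≤ |∑ i, X i ω|}).toReal ≤
      (μ {ω | lam * σ ≤ ∑ i, X i ω}).toReal + (μ {ω | lam * σ ≤ ∑ i, Z i ω}).toReal := by
    have hle := (measure_mono hsub).trans
      (measure_union_le (μ := μ) {ω | lam * σ ≤ ∑ i, X i ω} {ω | lam * σ ≤ ∑ i, Z i ω})
    rw [← ENNReal.toReal_add (measure_ne_top μ _) (measure_ne_top μ _)]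
    exact ENNReal.toReal_mono
      (ENNReal.add_ne_top.2 ⟨measure_ne_top μ _, measure_ne_top μ _⟩) hle
  calc (μ {ω | lam * σ ≤ |∑ i, X i ω|}).toReal
      ≤ (μ {ω | lam * σ ≤ ∑ i, X i ω}).toReal + (μ {ω | lam * σ ≤ ∑ i, Z i ω}).toReal :=
        hmeasure
    _ ≤ Real.exp (-lam ^ 2 / (2 * Real.exp a)) + Real.exp (-lam ^ 2 / (2 * Real.exp a)) :=
        add_le_add h1 h2
    _ = 2 * Real.exp (-lam ^ 2 / (2 * Real.exp a)) := by ring
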